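/- Let n = p₁⋯p_k be a prime factorization of n. Then rb(Z_n,S) ≤ 2(1−k) + Σ_{i=1}^{k} rb(Z_{p_i},S). -/

import Mathlib

def HasRainbowSidon {n : ℕ} {α : Type*} (c : ZMod n → α) : Prop :=
  ∃ x₁ x₂ x₃ x₄ : ZMod n, x₁ + x₂ = x₃ + x₄ ∧
    c x₁ ≠ c x₂ ∧ c x₁ ≠ c x₃ ∧ c x₁ ≠ c x₄ ∧
    c x₂ ≠ c x₃ ∧ c x₂ ≠ c x₄ ∧ c x₃ ≠ c x₄

noncomputable def rbSidon (n : ℕ) : ℕ :=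
  sInf {r : ℕ | 0 < r ∧ ∀ c : ZMod n → Fin r, Function.Surjective c → HasRainbowSidon c}

def rbSet (n : ℕ) : Set ℕ :=
  {r : ℕ | 0 < r ∧ ∀ c : ZMod n → Fin r, Function.Surjective c → HasRainbowSidon c}

lemma rbSet_nonempty (t : ℕ) [NeZero t] : (rbSet t).Nonempty := by
  refine ⟨t + 1, t.succ_pos, fun c hc => absurd (Fintype.card_le_of_surjective c hc) ?_⟩
  simp [ZMod.card]

lemma rb_mem (t : ℕ) [NeZero t] : rbSidon t ∈ rbSet t :=
  Nat.sInf_mem (rbSet_nonempty t)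

lemma two_le_rbSidon (t : ℕ) [NeZero t] : 2 ≤ rbSidon t := by
  obtain ⟨hpos, hall⟩ := rb_mem t
  rcases Nat.lt_or_ge (rbSidon t) 2 with h | h
  · exfalso
    have h1 : rbSidon t = 1 := by omega
    rw [h1] at hall
    have hsurj : Function.Surjective (fun _ : ZMod t => (0 : Fin 1)) := by
      intro y; exact ⟨0, Subsingleton.elim _ _⟩
    obtain ⟨x1, x2, x3, x4, _, h12, _⟩ := hall _ hsurj
    exact h12 (Subsingleton.elim _ _)
  · exact h

/-- Any coloring with at least `rbSidon t` colors in its image has a rainbow Sidon solution. -/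
lemma rainbow_of_le_card_image {t : ℕ} [NeZero t] {α : Type*} [DecidableEq α] (c' : ZMod t → α)
    (h : rbSidon t ≤ (Finset.univ.image c').card) : HasRainbowSidon c' := by
  classical
  obtain ⟨hpos, hall⟩ := rb_mem t
  obtain ⟨T, hTsub, hTcard⟩ := Finset.exists_subset_card_eq h
  let e : {x // x ∈ T} ≃ Fin (rbSidon t) := T.equivFinOfCardEq hTcard
  let σ : α → Fin (rbSidon t) := fun a => if ha : a ∈ T then e ⟨a, ha⟩ else ⟨0, hpos⟩
  have hsurj : Function.Surjective (σ ∘ c') := by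
    intro i
    obtain ⟨x, hx⟩ := Finset.mem_image.mp (hTsub (e.symm i).2)
    refine ⟨x, ?_⟩
    show σ (c' x) = i
    rw [hx.2]
    have h1 : σ (e.symm i).1 = e ⟨(e.symm i).1, (e.symm i).2⟩ := dif_pos (e.symm i).2
    rw [h1, Subtype.eta, Equiv.apply_symm_apply]
  obtain ⟨x1, x2, x3, x4, heq, h12, h13, h14, h23, h24, h34⟩ := hall _ hsurj
  exact ⟨x1, x2, x3, x4, heq,
    fun h => h12 (congrArg σ h), fun h => h13 (congrArg σ h), fun h => h14 (congrArg σ h),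
    fun h => h23 (congrArg σ h), fun h => h24 (congrArg σ h), fun h => h34 (congrArg σ h)⟩

lemma core {m p r : ℕ} (hm : 0 < m) (hp : p.Prime) (c : ZMod (m * p) → Fin r)
    (hsurj : Function.Surjective c) (hnr : ¬ HasRainbowSidon c) :
    r + 3 ≤ rbSidon m + rbSidon p := by
  classical
  haveI : NeZero m := ⟨hm.ne'⟩
  haveI : NeZero p := ⟨hp.pos.ne'⟩
  haveI : NeZero (m * p) := ⟨Nat.mul_ne_zero hm.ne' hp.pos.ne'⟩
  haveI : Fact p.Prime := ⟨hp⟩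
  -- r ≥ 1
  have hr0 : 0 < r := by
    rcases hsurj with _
    by_contra h
    have : r = 0 := by omega
    subst this
    exact Fin.elim0 (c 0)
  let π : ZMod (m * p) →+* ZMod m := ZMod.castHom (dvd_mul_right m p) (ZMod m)
  have hπnat : ∀ a : ℕ, π (a : ZMod (m * p)) = (a : ZMod m) := fun a => map_natCast π a
  let ι : ZMod p → ZMod (m * p) := fun t => ((m * t.val : ℕ) : ZMod (m * p))
  have hmp0 : ((m * p : ℕ) : ZMod (m * p)) = 0 := ZMod.natCast_self (m * p)
  have hι_add : ∀ a b, ι (a + b) = ι a + ι b := by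
    intro a b
    show ((m * (a + b).val : ℕ) : ZMod (m * p)) = ((m * a.val : ℕ) : ZMod (m * p)) + ((m * b.val : ℕ) : ZMod (m * p))
    rw [ZMod.val_add]
    have key : (m * (a.val + b.val) : ℕ)
        = m * ((a.val + b.val) % p) + (m * p) * ((a.val + b.val) / p) := by
      conv_lhs => rw [← Nat.mod_add_div (a.val + b.val) p]
      ring
    have : ((m * (a.val + b.val) : ℕ) : ZMod (m * p)) = ((m * ((a.val + b.val) % p) : ℕ) : ZMod (m * p)) := by
      rw [key]; push_cast [hmp0]; ring
    rw [← this]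
    push_cast
    ring
  have hι0 : ι 0 = 0 := by show ((m * (0 : ZMod p).val : ℕ) : ZMod (m * p)) = 0; simp
  have hπι : ∀ t, π (ι t) = 0 := by
    intro t
    show π ((m * t.val : ℕ) : ZMod (m * p)) = 0
    rw [hπnat]
    push_cast [ZMod.natCast_self m]
    ring
  have hker : ∀ x : ZMod (m * p), π x = 0 → ∃ t, x = ι t := by
    intro x hx
    have hxv : π x = ((x.val : ℕ) : ZMod m) := by
      rw [ZMod.castHom_apply, ← ZMod.natCast_val]
    rw [hxv] at hx
    have hdvd : m ∣ x.val := (ZMod.natCast_eq_zero_iff _ _).mp hx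
    obtain ⟨t, ht⟩ := hdvd
    have htlt : t < p := by
      have hv := x.val_lt
      rw [ht] at hv
      exact lt_of_mul_lt_mul_left hv (Nat.zero_le m)
    refine ⟨(t : ZMod p), ?_⟩
    show x = ((m * ((t : ZMod p)).val : ℕ) : ZMod (m * p))
    rw [ZMod.val_cast_of_lt htlt, ← ht, ZMod.natCast_zmod_val]
  have hι_smul : ∀ (j : ℕ) (s : ZMod p), ι ((j : ZMod p) * s) = j • ι s := by
    intro j s
    induction j with
    | zero => simpa using hι0
    | succ j ih =>
      push_cast
      rw [add_mul, one_mul, hι_add, ih, succ_nsmul]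
  -- L2: in a non-monochromatic fiber, every nonzero k in the kernel admits a jump
  have L2 : ∀ (i : ZMod m) (k : ZMod (m * p)), π k = 0 → k ≠ 0 →
      (∃ u v, π u = i ∧ π v = i ∧ c u ≠ c v) →
      ∃ z, π z = i ∧ c z ≠ c (z + k) := by
    intro i k hk hk0 ⟨u, v, hu, hv, huv⟩
    by_contra hcon
    push_neg at hcon
    have step : ∀ (j : ℕ) (z : ZMod (m * p)), π z = i → c (z + j • k) = c z := by
      intro j
      induction j with
      | zero => intro z hz; simp
      | succ j ih =>
        intro z hz
        have hrw : z + (j + 1) • k = (z + k) + j • k := by rw [succ_nsmul]; ring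
        have hzk : π (z + k) = i := by rw [map_add, hk, hz, add_zero]
        rw [hrw, ih _ hzk]
        exact (hcon z hz).symm
    obtain ⟨t, ht⟩ := hker (v - u) (by rw [map_sub, hu, hv, sub_self])
    obtain ⟨s, hs⟩ := hker k hk
    have hs0 : s ≠ 0 := by
      intro h
      exact hk0 (by rw [hs, h, hι0])
    set j := ((t * s⁻¹ : ZMod p)).val with hj
    have hjs : ((j : ZMod p)) * s = t := by
      rw [hj, ZMod.natCast_zmod_val, mul_assoc, inv_mul_cancel₀ hs0, mul_one]
    have hjk : j • k = v - u := by
      rw [hs, ← hι_smul, hjs, ← ht]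
    have hcu := step j u hu
    rw [hjk] at hcu
    simp only [add_sub_cancel] at hcu
    exact huv hcu.symm
  by_cases hmono : ∀ x y : ZMod (m * p), π x = π y → c x = c y
  · -- Case A: the coloring factors through the quotient
    have hrbp := two_le_rbSidon p
    let lift : ZMod m → ZMod (m * p) := fun i => ((i.val : ℕ) : ZMod (m * p))
    have hlift : ∀ i, π (lift i) = i := by
      intro i
      show π ((i.val : ℕ) : ZMod (m * p)) = i
      rw [hπnat, ZMod.natCast_zmod_val]
    let c0 : ZMod m → Fin r := fun i => c (lift i)
    have hc0surj : Function.Surjective c0 := by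
      intro y
      obtain ⟨x, hx⟩ := hsurj y
      exact ⟨π x, by show c (lift (π x)) = y; rw [← hx]; exact hmono _ _ (hlift (π x))⟩
    have hc0nr : ¬ HasRainbowSidon c0 := by
      rintro ⟨i1, i2, i3, i4, heq, d12, d13, d14, d23, d24, d34⟩
      apply hnr
      refine ⟨lift i1, lift i2, lift i3, lift i1 + lift i2 - lift i3, by ring, d12, d13, ?_, d23, ?_, ?_⟩
      all_goals
        have h4 : c (lift i1 + lift i2 - lift i3) = c0 i4 := by
          apply hmono
          rw [hlift]
          rw [map_sub, map_add, hlift, hlift, hlift]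
          linear_combination heq
        rw [h4]
      exacts [d14, d24, d34]
    have himg : (Finset.univ.image c0).card < rbSidon m := by
      by_contra h
      push_neg at h
      exact hc0nr (rainbow_of_le_card_image c0 h)
    have himg2 : (Finset.univ.image c0) = (Finset.univ : Finset (Fin r)) := by
      apply Finset.eq_univ_of_forall
      intro y
      obtain ⟨i, hi⟩ := hc0surj y
      exact hi ▸ Finset.mem_image_of_mem c0 (Finset.mem_univ i)
    rw [himg2] at himg
    simp only [Finset.card_univ, Fintype.card_fin] at himg
    omega
  · -- Case B
    push_neg at hmono
    obtain ⟨u₀, v₀, huv₀π, huv₀c⟩ := hmono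
    set i_R := π u₀ with hiR
    let cR : ZMod p → Fin r := fun t => c (u₀ + ι t)
    set S_R : Finset (Fin r) := Finset.univ.image cR with hSRdef
    have M1 : ∀ z, π z = i_R → c z ∈ S_R := by
      intro z hz
      obtain ⟨t, ht⟩ := hker (z - u₀) (by rw [map_sub, hz, sub_self])
      have hzt : z = u₀ + ι t := by rw [← ht]; ring
      rw [hzt]
      exact Finset.mem_image_of_mem _ (Finset.mem_univ t)
    have hSRcard : S_R.card < rbSidon p := by
      by_contra h
      push_neg at h
      obtain ⟨a, b, d, e, hsum, h12, h13, h14, h23, h24, h34⟩ :=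
        rainbow_of_le_card_image cR h
      apply hnr
      refine ⟨u₀ + ι a, u₀ + ι b, u₀ + ι d, u₀ + ι e, ?_, h12, h13, h14, h23, h24, h34⟩
      have habde : ι a + ι b = ι d + ι e := by rw [← hι_add, ← hι_add, hsum]
      calc u₀ + ι a + (u₀ + ι b) = u₀ + u₀ + (ι a + ι b) := by ring
      _ = u₀ + u₀ + (ι d + ι e) := by rw [habde]
      _ = u₀ + ι d + (u₀ + ι e) := by ring
    have hmulti : ∃ u v, π u = i_R ∧ π v = i_R ∧ c u ≠ c v :=
      ⟨u₀, v₀, rfl, huv₀π.symm, huv₀c⟩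
    have L1 : ∀ x y, π x = π y → c x ∉ S_R → c y ∉ S_R → c x = c y := by
      intro x y hxy hx hy
      by_contra hne
      have hk0 : x - y ≠ 0 := sub_ne_zero.mpr (fun h => hne (by rw [h]))
      obtain ⟨z, hz, hzc⟩ := L2 i_R (x - y) (by rw [map_sub, hxy, sub_self]) hk0 hmulti
      have hz2 : π (z + (x - y)) = i_R := by
        rw [map_add, map_sub, hxy, sub_self, add_zero, hz]
      have hzm := M1 z hz
      have hz2m := M1 _ hz2
      refine hnr ⟨x, z, y, z + (x - y), by ring, ?_, hne, ?_, ?_, hzc, ?_⟩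
      · exact fun h => hx (by rw [h]; exact hzm)
      · exact fun h => hx (by rw [h]; exact hz2m)
      · exact fun h => hy (by rw [← h]; exact hzm)
      · exact fun h => hy (by rw [h]; exact hz2m)
    let chat : ZMod m → Option (Fin r) := fun i =>
      if h : ∃ x, π x = i ∧ c x ∉ S_R then some (c h.choose) else none
    have P1 : ∀ i ν, chat i = some ν → ∃ x, π x = i ∧ c x = ν ∧ ν ∉ S_R := by
      intro i ν h
      by_cases h' : ∃ x, π x = i ∧ c x ∉ S_R
      · have hc := h'.choose_spec
        have hh : chat i = some (c h'.choose) := dif_pos h'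
        rw [hh] at h
        have hcν : c h'.choose = ν := Option.some_injective _ h
        exact ⟨h'.choose, hc.1, hcν, hcν ▸ hc.2⟩
      · rw [show chat i = none from dif_neg h'] at h
        simp at h
    have P2 : ∀ i, chat i = none → ∀ x, π x = i → c x ∈ S_R := by
      intro i h x hx
      by_contra hc
      rw [show chat i = some _ from dif_pos ⟨x, hx, hc⟩] at h
      simp at h
    have H : ∀ j1 j2 j3 j4 : ZMod m, j1 + j2 = j3 + j4 →
        ∀ ν1 ν2 ν3, chat j1 = some ν1 → chat j2 = some ν2 → chat j3 = some ν3 →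
        ν1 ≠ ν2 → ν1 ≠ ν3 → ν2 ≠ ν3 →
        chat j4 ≠ some ν1 → chat j4 ≠ some ν2 → chat j4 ≠ some ν3 → False := by
      intro j1 j2 j3 j4 heq ν1 ν2 ν3 h1 h2 h3 d12 d13 d23 e1 e2 e3
      obtain ⟨x1, hx1π, hx1c, hν1⟩ := P1 _ _ h1
      obtain ⟨x2, hx2π, hx2c, hν2⟩ := P1 _ _ h2
      obtain ⟨x3, hx3π, hx3c, hν3⟩ := P1 _ _ h3
      set x4 := x1 + x2 - x3 with hx4
      have hx4π : π x4 = j4 := by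
        rw [hx4, map_sub, map_add, hx1π, hx2π, hx3π]
        linear_combination heq
      have hx4c : c x4 = ν1 ∨ c x4 = ν2 ∨ c x4 = ν3 := by
        by_contra hcc
        push_neg at hcc
        refine hnr ⟨x1, x2, x3, x4, by rw [hx4]; ring, ?_, ?_, ?_, ?_, ?_, ?_⟩
        · rw [hx1c, hx2c]; exact d12
        · rw [hx1c, hx3c]; exact d13
        · rw [hx1c]; exact (Ne.symm hcc.1)
        · rw [hx2c, hx3c]; exact d23
        · rw [hx2c]; exact (Ne.symm hcc.2.1)
        · rw [hx3c]; exact (Ne.symm hcc.2.2)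
      have hx4S : c x4 ∉ S_R := by
        rcases hx4c with h | h | h <;> rw [h] <;> assumption
      cases hc4 : chat j4 with
      | none => exact hx4S (P2 _ hc4 _ hx4π)
      | some ν4 =>
        obtain ⟨x4', hx4'π, hx4'c, hν4⟩ := P1 _ _ hc4
        have hc44 : c x4 = ν4 := by
          rw [← hx4'c]
          exact L1 x4 x4' (by rw [hx4π, hx4'π]) hx4S (by rw [hx4'c]; exact hν4)
        rcases hx4c with h | h | h
        · exact e1 (hc4.trans (congrArg some (hc44.symm.trans h)))
        · exact e2 (hc4.trans (congrArg some (hc44.symm.trans h)))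
        · exact e3 (hc4.trans (congrArg some (hc44.symm.trans h)))
    have hchatnr : ¬ HasRainbowSidon chat := by
      rintro ⟨i1, i2, i3, i4, heq, d12, d13, d14, d23, d24, d34⟩
      cases h1 : chat i1 with
      | none =>
        cases h2 : chat i2 with
        | none => exact d12 (h1.trans h2.symm)
        | some ν2 =>
          cases h3 : chat i3 with
          | none => exact d13 (h1.trans h3.symm)
          | some ν3 =>
            cases h4 : chat i4 with
            | none => exact d14 (h1.trans h4.symm)
            | some ν4 =>
              refine H i3 i4 i2 i1 (by rw [← heq]; ring) ν3 ν4 ν2 h3 h4 h2 ?_ ?_ ?_ ?_ ?_ ?_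
              · exact fun h => d34 (by rw [h3, h4, h])
              · exact fun h => d23 (by rw [h2, h3, h])
              · exact fun h => d24 (by rw [h2, h4, h])
              · exact fun h => by simp [h1] at h
              · exact fun h => by simp [h1] at h
              · exact fun h => by simp [h1] at h
      | some ν1 =>
        cases h2 : chat i2 with
        | none =>
          cases h3 : chat i3 with
          | none => exact d23 (h2.trans h3.symm)
          | some ν3 =>
            cases h4 : chat i4 with
            | none => exact d24 (h2.trans h4.symm)
            | some ν4 =>
              refine H i3 i4 i1 i2 heq.symm ν3 ν4 ν1 h3 h4 h1 ?_ ?_ ?_ ?_ ?_ ?_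
              · exact fun h => d34 (by rw [h3, h4, h])
              · exact fun h => d13 (by rw [h1, h3, ← h])
              · exact fun h => d14 (by rw [h1, h4, ← h])
              · exact fun h => by simp [h2] at h
              · exact fun h => by simp [h2] at h
              · exact fun h => by simp [h2] at h
        | some ν2 =>
          cases h3 : chat i3 with
          | none =>
            cases h4 : chat i4 with
            | none => exact d34 (h3.trans h4.symm)
            | some ν4 =>
              refine H i1 i2 i4 i3 (heq.trans (add_comm _ _)) ν1 ν2 ν4 h1 h2 h4 ?_ ?_ ?_ ?_ ?_ ?_
              · exact fun h => d12 (by rw [h1, h2, h])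
              · exact fun h => d14 (by rw [h1, h4, h])
              · exact fun h => d24 (by rw [h2, h4, h])
              · exact fun h => by simp [h3] at h
              · exact fun h => by simp [h3] at h
              · exact fun h => by simp [h3] at h
          | some ν3 =>
            refine H i1 i2 i3 i4 heq ν1 ν2 ν3 h1 h2 h3 ?_ ?_ ?_ ?_ ?_ ?_
            · exact fun h => d12 (by rw [h1, h2, h])
            · exact fun h => d13 (by rw [h1, h3, h])
            · exact fun h => d23 (by rw [h2, h3, h])
            · exact fun h => d14 (h1.trans h.symm)
            · exact fun h => d24 (h2.trans h.symm)
            · exact fun h => d34 (h3.trans h.symm)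
    set T := Finset.univ.image chat with hT
    have hTcard : T.card < rbSidon m := by
      by_contra h
      push_neg at h
      exact hchatnr (rainbow_of_le_card_image chat h)
    have hnone : chat i_R = none :=
      dif_neg (by rintro ⟨x, hx, hc⟩; exact hc (M1 x hx))
    have hnoneT : (none : Option (Fin r)) ∈ T :=
      hnone ▸ Finset.mem_image_of_mem chat (Finset.mem_univ i_R)
    have hcover : (Finset.univ : Finset (Fin r)) ⊆
        S_R ∪ (T.erase none).image (fun o => o.getD ⟨0, hr0⟩) := by
      intro γ _
      by_cases hγ : γ ∈ S_R
      · exact Finset.mem_union_left _ hγ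
      · obtain ⟨x, hx⟩ := hsurj γ
        have hcx : c x ∉ S_R := by rw [hx]; exact hγ
        have hchx : chat (π x) ≠ none := fun h => hcx (P2 _ h x rfl)
        obtain ⟨ν, hν⟩ := Option.ne_none_iff_exists'.mp hchx
        obtain ⟨x', hx'π, hx'c, hν'⟩ := P1 _ _ hν
        have hγν : γ = ν := by
          rw [← hx, ← hx'c]
          exact L1 x x' hx'π.symm hcx (by rw [hx'c]; exact hν')
        refine Finset.mem_union_right _ (Finset.mem_image.mpr ⟨some ν, ?_, ?_⟩)
        · exact Finset.mem_erase.mpr ⟨by simp,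
            hν ▸ Finset.mem_image_of_mem chat (Finset.mem_univ (π x))⟩
        · simp [hγν]
    have hcard2 : r ≤ S_R.card + (T.card - 1) := by
      have h1 := Finset.card_le_card hcover
      have h2 : ((T.erase none).image (fun o : Option (Fin r) => o.getD ⟨0, hr0⟩)).card
          ≤ T.card - 1 := by
        calc ((T.erase none).image (fun o : Option (Fin r) => o.getD ⟨0, hr0⟩)).card
            ≤ (T.erase none).card := Finset.card_image_le
          _ = T.card - 1 := Finset.card_erase_of_mem hnoneT
      have h3 := Finset.card_union_le S_R
        ((T.erase none).image (fun o : Option (Fin r) => o.getD ⟨0, hr0⟩))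
      simp only [Finset.card_univ, Fintype.card_fin] at h1
      omega
    have hTpos : 1 ≤ T.card := Finset.card_pos.mpr ⟨none, hnoneT⟩
    omega

lemma rbSidon_mul_le (m p : ℕ) (hm : 0 < m) (hp : p.Prime) :
    rbSidon (m * p) + 2 ≤ rbSidon m + rbSidon p := by
  haveI : NeZero m := ⟨hm.ne'⟩
  haveI : NeZero p := ⟨hp.pos.ne'⟩
  haveI : NeZero (m * p) := ⟨Nat.mul_ne_zero hm.ne' hp.pos.ne'⟩
  have h2m := two_le_rbSidon m
  have h2p := two_le_rbSidon p
  have hmem : (rbSidon m + rbSidon p - 2) ∈ rbSet (m * p) := by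
    constructor
    · omega
    · intro c hc
      by_contra hnr
      have := core hm hp c hc hnr
      omega
  have hle := Nat.sInf_le hmem
  have hrb : rbSidon (m * p) = sInf (rbSet (m * p)) := rfl
  rw [← hrb] at hle
  omega

theorem rb_sidon_upper_bound (n : ℕ) (l : List ℕ) (hne : l ≠ [])
    (hprime : ∀ p ∈ l, p.Prime) (hprod : n = l.prod) :
    (rbSidon n : ℤ) ≤ 2 * (1 - (l.length : ℤ)) + (l.map fun p => (rbSidon p : ℤ)).sum := by
  subst hprod
  induction l with
  | nil => exact absurd rfl hne
  | cons p l' ih =>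
    rcases eq_or_ne l' [] with h | h
    · subst h
      simp
    · have hprime' : ∀ q ∈ l', q.Prime := fun q hq => hprime q (List.mem_cons_of_mem p hq)
      have hm : 0 < l'.prod := List.prod_pos (fun q hq => (hprime' q hq).pos)
      have hp : p.Prime := hprime p (List.mem_cons_self)
      have hmain := rbSidon_mul_le l'.prod p hm hp
      have hih := ih h hprime'
      have hprodc : (p :: l').prod = l'.prod * p := by
        rw [List.prod_cons, mul_comm]
      rw [hprodc]
      simp only [List.map_cons, List.sum_cons, List.length_cons]
      have hmainZ : (rbSidon (l'.prod * p) : ℤ) + 2 ≤ (rbSidon l'.prod : ℤ) + (rbSidon p : ℤ) := by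
        exact_mod_cast hmain
      push_cast
      linarith
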